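/- There exists a Hilbert space H continuously embedded in L²(𝕋) such that H contains all trigonometric polynomials, the trigonometric polynomials are dense in H, but the holomorphic polynomials (finite linear combinations of e^{int}, n ≥ 0) are not dense in H ∩ H², where H² is the Hardy space viewed as a closed subspace of L²(𝕋). -/

import Mathlib

open MeasureTheory AddCircle
open scoped InnerProductSpace Real ENNReal

set_option maxHeartbeats 1000000

noncomputable section Stmt18Construction

namespace Stmt18

/-- Index type: `ℤ` indexes the "visible" coordinates, `ℕ` the "hidden" ones. -/
abbrev I2 : Type := ℤ ⊕ ℕ

/-- The ambient Hilbert space `ℓ²(ℤ ⊕ ℕ)`. -/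
abbrev AMB : Type := lp (fun _ : I2 => ℂ) 2

/-- `ℓ²(ℤ)`. -/
abbrev Z2 : Type := lp (fun _ : ℤ => ℂ) 2

/-- Basis vectors of the ambient space. -/
def e (i : I2) : AMB := lp.single 2 i 1

def el (n : ℤ) : AMB := e (Sum.inl n)

def er (m : ℕ) : AMB := e (Sum.inr m)

@[simp] lemma inner_e_e (i j : I2) : ⟪e i, e j⟫_ℂ = if i = j then 1 else 0 := by
  classical
  rw [e, e, lp.inner_single_left]
  rcases eq_or_ne i j with h | h
  · subst h; simp [lp.single_apply_self]
  · rw [if_neg h]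
    simp [lp.single_apply_ne 2 j _ h, Pi.single_apply, h]

@[simp] lemma inner_e_apply (i : I2) (v : AMB) : ⟪e i, v⟫_ℂ = v i := by
  rw [e, lp.inner_single_left]; simp

@[simp] lemma inner_apply_e (i : I2) (v : AMB) : ⟪v, e i⟫_ℂ = (starRingEnd ℂ) (v i) := by
  rw [e, lp.inner_single_right]; simp [RCLike.inner_apply]

@[simp] lemma inner_el_el (a b : ℤ) : ⟪el a, el b⟫_ℂ = if a = b then 1 else 0 := by
  rw [el, el, inner_e_e]; simp

@[simp] lemma inner_el_er (a : ℤ) (b : ℕ) : ⟪el a, er b⟫_ℂ = 0 := by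
  rw [el, er, inner_e_e]; simp

@[simp] lemma inner_er_el (a : ℕ) (b : ℤ) : ⟪er a, el b⟫_ℂ = 0 := by
  rw [el, er, inner_e_e]; simp

@[simp] lemma inner_er_er (a b : ℕ) : ⟪er a, er b⟫_ℂ = if a = b then 1 else 0 := by
  rw [er, er, inner_e_e]; simp

@[simp] lemma norm_e (i : I2) : ‖e i‖ = 1 := by
  have h2 : (0:ℝ) < (2:ℝ≥0∞).toReal := by norm_num
  have := lp.norm_single (E := fun _ : I2 => ℂ) (by norm_num : (0:ℝ≥0∞) < 2) i (1:ℂ)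
  simpa [e] using this

/-- The system `x n`, `n ∈ ℤ`, which will correspond to the Fourier modes. -/
def x : ℤ → AMB
  | Int.ofNat k => el (Int.ofNat k) + (2:ℂ)^k • er k
  | Int.negSucc j => el (Int.negSucc j) + (2:ℂ)^(j+1) • ∑ m ∈ Finset.range (j+2), er m

/-- The submodule generated by the `x n`. -/
def Hspan : Submodule ℂ AMB := Submodule.span ℂ (Set.range x)

/-- The Hilbert space of the construction. -/
def Hs : Submodule ℂ AMB := Hspan.topologicalClosure

lemma x_mem_Hs (n : ℤ) : x n ∈ Hs :=
  Hspan.le_topologicalClosure (Submodule.subset_span (Set.mem_range_self n))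

instance : CompleteSpace Hs := Hspan.isClosed_topologicalClosure.completeSpace_coe

/-- The coordinate projection `ℓ²(ℤ ⊕ ℕ) → ℓ²(ℤ)`, as a linear map. -/
def Plin : AMB →ₗ[ℂ] Z2 where
  toFun v := ⟨fun n => v (Sum.inl n), by
    apply memℓp_gen
    exact ((lp.memℓp v).summable (by norm_num)).comp_injective Sum.inl_injective⟩
  map_add' v w := by
    apply lp.ext; funext n
    simp [lp.coeFn_add, Pi.add_apply]; rfl
  map_smul' c v := by
    apply lp.ext; funext n
    simp [lp.coeFn_smul, Pi.smul_apply]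

@[simp] lemma Plin_apply (v : AMB) (n : ℤ) : (Plin v) n = v (Sum.inl n) := rfl

lemma Plin_norm_le (v : AMB) : ‖Plin v‖ ≤ 1 * ‖v‖ := by
  rw [one_mul]
  have h2 : (0:ℝ) < (2:ℝ≥0∞).toReal := by norm_num
  rw [lp.norm_eq_tsum_rpow h2, lp.norm_eq_tsum_rpow h2 v]
  apply Real.rpow_le_rpow
  · exact tsum_nonneg fun i => Real.rpow_nonneg (norm_nonneg _) _
  · refine Summable.tsum_le_tsum_of_inj Sum.inl Sum.inl_injective
      (fun c _ => Real.rpow_nonneg (norm_nonneg _) _) (fun n => le_of_eq rfl)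
      (((lp.memℓp v).summable h2).comp_injective Sum.inl_injective)
      ((lp.memℓp v).summable h2)
  · norm_num

/-- The coordinate projection as a continuous linear map. -/
def P : AMB →L[ℂ] Z2 := Plin.mkContinuous 1 Plin_norm_le

@[simp] lemma P_apply (v : AMB) (n : ℤ) : (P v) n = v (Sum.inl n) := rfl

lemma P_el (a : ℤ) : P (el a) = lp.single 2 a 1 := by
  apply lp.ext; funext n
  classical
  rcases eq_or_ne n a with h | h
  · subst h
    simp [el, e, lp.single_apply_self]
  · have h1 : (Sum.inl n : I2) ≠ Sum.inl a := by simp [h]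
    simp [el, e, lp.single_apply_ne _ _ _ h1, lp.single_apply_ne _ _ _ h, Pi.single_apply, h]

lemma P_er (m : ℕ) : P (er m) = 0 := by
  apply lp.ext; funext n
  have h1 : (Sum.inl n : I2) ≠ Sum.inr m := by simp
  simp [er, e, lp.single_apply_ne _ _ _ h1]

lemma P_x (n : ℤ) : P (x n) = lp.single 2 n 1 := by
  cases n with
  | ofNat k =>
      rw [show x (Int.ofNat k) = el (Int.ofNat k) + (2:ℂ)^k • er k from rfl,
        map_add, _root_.map_smul, P_el, P_er, smul_zero, add_zero]
  | negSucc j =>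
      rw [show x (Int.negSucc j)
            = el (Int.negSucc j) + (2:ℂ)^(j+1) • ∑ m ∈ Finset.range (j+2), er m from rfl,
        map_add, _root_.map_smul, map_sum]
      simp [P_el, P_er]


/-! ### The special vectors `f` and `g` -/

/-- Terms of the series defining `f`. -/
def fterm (k : ℕ) : AMB := ((2:ℂ)⁻¹)^k • el (k : ℤ)

/-- The pathological vector `f`. -/
def fv : AMB := ∑' k, fterm k

/-- Terms of the series defining `g`. -/
def gterm (k : ℕ) : AMB := (-(((2:ℂ)⁻¹)^k)) • el (k : ℤ) + ((4:ℂ)⁻¹)^k • er k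

/-- The witness functional vector `g`. -/
def gv : AMB := ∑' k, gterm k

lemma norm_fterm (k : ℕ) : ‖fterm k‖ = (2⁻¹:ℝ)^k := by
  rw [fterm, norm_smul, el, norm_e, mul_one, norm_pow, norm_inv]
  norm_num

lemma summable_fterm : Summable fterm := by
  apply Summable.of_norm
  simp only [norm_fterm]
  exact summable_geometric_of_lt_one (by norm_num) (by norm_num)

lemma summable_gterm : Summable gterm := by
  apply Summable.of_norm
  have hle : ∀ k : ℕ, ‖gterm k‖ ≤ (2⁻¹:ℝ)^k + (4⁻¹:ℝ)^k := by
    intro k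
    rw [gterm]
    refine (norm_add_le _ _).trans ?_
    rw [norm_smul, norm_smul, el, er, norm_e, norm_e, mul_one, mul_one, norm_neg,
      norm_pow, norm_pow, norm_inv, norm_inv]
    norm_num
  refine Summable.of_nonneg_of_le (fun k => norm_nonneg _) hle ?_
  exact (summable_geometric_of_lt_one (by norm_num) (by norm_num)).add
    (summable_geometric_of_lt_one (by norm_num) (by norm_num))

lemma inner_e_fv (i : I2) : ⟪e i, fv⟫_ℂ = ∑' k, ⟪e i, fterm k⟫_ℂ :=
  (innerSL ℂ (e i)).map_tsum summable_fterm

lemma inner_e_gv (i : I2) : ⟪e i, gv⟫_ℂ = ∑' k, ⟪e i, gterm k⟫_ℂ :=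
  (innerSL ℂ (e i)).map_tsum summable_gterm

lemma inner_e_fterm (i : I2) (k : ℕ) :
    ⟪e i, fterm k⟫_ℂ = if i = Sum.inl (k:ℤ) then ((2:ℂ)⁻¹)^k else 0 := by
  rw [fterm, inner_smul_right, el, inner_e_e]
  split_ifs <;> simp

lemma inner_e_gterm (i : I2) (k : ℕ) :
    ⟪e i, gterm k⟫_ℂ = (if i = Sum.inl (k:ℤ) then -(((2:ℂ)⁻¹)^k) else 0)
      + (if i = Sum.inr k then ((4:ℂ)⁻¹)^k else 0) := by
  rw [gterm, inner_add_right, inner_smul_right, inner_smul_right, el, er, inner_e_e, inner_e_e]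
  split_ifs <;> simp

lemma inner_el_fv (k : ℕ) : ⟪el (k:ℤ), fv⟫_ℂ = ((2:ℂ)⁻¹)^k := by
  rw [el, inner_e_fv, tsum_eq_single k ?_]
  · rw [inner_e_fterm, if_pos rfl]
  · intro j hj
    rw [inner_e_fterm, if_neg]
    simp only [Sum.inl.injEq, Int.natCast_inj]
    exact fun h => hj (by omega)

lemma conj_two : (starRingEnd ℂ) (2:ℂ) = 2 := map_ofNat _ 2

lemma inner_elneg_fv (j : ℕ) : ⟪el (Int.negSucc j), fv⟫_ℂ = 0 := by
  rw [el, inner_e_fv]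
  have h0 : ∀ k : ℕ, ⟪e (Sum.inl (Int.negSucc j)), fterm k⟫_ℂ = 0 := by
    intro k
    rw [inner_e_fterm, if_neg]
    intro h
    have h' := Sum.inl.inj h
    rw [Int.negSucc_eq] at h'
    omega
  rw [tsum_congr h0, tsum_zero]

lemma inner_er_fv (m : ℕ) : ⟪er m, fv⟫_ℂ = 0 := by
  rw [er, inner_e_fv]
  have h0 : ∀ k : ℕ, ⟪e (Sum.inr m), fterm k⟫_ℂ = 0 := by
    intro k
    rw [inner_e_fterm, if_neg]
    simp
  rw [tsum_congr h0, tsum_zero]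

lemma inner_el_gv (k : ℕ) : ⟪el (k:ℤ), gv⟫_ℂ = -(((2:ℂ)⁻¹)^k) := by
  rw [el, inner_e_gv, tsum_eq_single k ?_]
  · rw [inner_e_gterm, if_pos rfl, if_neg (by simp), add_zero]
  · intro j hj
    rw [inner_e_gterm, if_neg, if_neg (by simp), add_zero]
    simp only [Sum.inl.injEq, Int.natCast_inj]
    exact fun h => hj (by omega)

lemma inner_er_gv (m : ℕ) : ⟪er m, gv⟫_ℂ = ((4:ℂ)⁻¹)^m := by
  rw [er, inner_e_gv, tsum_eq_single m ?_]
  · rw [inner_e_gterm, if_neg (by simp), if_pos rfl, zero_add]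
  · intro j hj
    rw [inner_e_gterm, if_neg (by simp), if_neg, zero_add]
    simp only [Sum.inr.injEq]
    exact fun h => hj (by omega)

lemma inner_x_gv (n : ℤ) (hn : 0 ≤ n) : ⟪x n, gv⟫_ℂ = 0 := by
  obtain ⟨k, rfl⟩ : ∃ k : ℕ, n = (k : ℤ) := ⟨n.toNat, (Int.toNat_of_nonneg hn).symm⟩
  have hx : x (k : ℤ) = el (k:ℤ) + (2:ℂ)^k • er k := rfl
  rw [hx, inner_add_left, inner_smul_left, inner_el_gv, inner_er_gv]
  have h24 : (starRingEnd ℂ) ((2:ℂ)^k) * ((4:ℂ)⁻¹)^k = ((2:ℂ)⁻¹)^k := by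
    rw [map_pow, conj_two, ← mul_pow]
    norm_num
  rw [h24]
  ring

lemma inner_fv_gv : ⟪fv, gv⟫_ℂ = -(4/3 : ℂ) := by
  have h1 : ⟪fv, gv⟫_ℂ = ∑' k, ⟪fv, gterm k⟫_ℂ := (innerSL ℂ fv).map_tsum summable_gterm
  have h2 : ∀ k : ℕ, ⟪fv, gterm k⟫_ℂ = -(((4:ℂ)⁻¹)^k) := by
    intro k
    rw [gterm, inner_add_right, inner_smul_right, inner_smul_right]
    have hfel : ⟪fv, el (k:ℤ)⟫_ℂ = ((2:ℂ)⁻¹)^k := by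
      rw [← inner_conj_symm, inner_el_fv]
      rw [map_pow, map_inv₀, conj_two]
    have hfer : ⟪fv, er k⟫_ℂ = 0 := by
      rw [← inner_conj_symm, inner_er_fv, map_zero]
    rw [hfel, hfer, mul_zero, add_zero]
    have : ((2:ℂ)⁻¹)^k * ((2:ℂ)⁻¹)^k = ((4:ℂ)⁻¹)^k := by
      rw [← mul_pow]; norm_num
    rw [neg_mul, this]
  rw [h1]
  rw [tsum_congr h2]
  rw [tsum_neg]
  have : ∑' k : ℕ, ((4:ℂ)⁻¹)^k = (1 - (4:ℂ)⁻¹)⁻¹ := by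
    apply tsum_geometric_of_norm_lt_one
    rw [norm_inv]
    norm_num
  rw [this]
  norm_num


/-! ### The orthogonality system `psi` used to prove injectivity -/

lemma x_nat (k : ℕ) : x (k:ℤ) = el (k:ℤ) + (2:ℂ)^k • er k := rfl

lemma x_negSucc (j : ℕ) :
    x (Int.negSucc j) = el (Int.negSucc j) + (2:ℂ)^(j+1) • ∑ m ∈ Finset.range (j+2), er m := rfl

lemma inner_x_el (n t : ℤ) : ⟪x n, el t⟫_ℂ = if n = t then 1 else 0 := by
  cases n with
  | ofNat k =>
      rw [show Int.ofNat k = (k:ℤ) from rfl, x_nat, inner_add_left, inner_smul_left,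
        inner_er_el, mul_zero, add_zero, inner_el_el]
  | negSucc j =>
      rw [x_negSucc, inner_add_left, inner_smul_left, sum_inner]
      have h0 : ∀ m ∈ Finset.range (j+2), ⟪er m, el t⟫_ℂ = 0 := fun m _ => inner_er_el m t
      rw [Finset.sum_congr rfl h0, Finset.sum_const_zero, mul_zero, add_zero, inner_el_el]

lemma inner_x_er_nat (k t : ℕ) : ⟪x (k:ℤ), er t⟫_ℂ = if k = t then (2:ℂ)^k else 0 := by
  rw [x_nat, inner_add_left, inner_smul_left, inner_el_er, inner_er_er,
    map_pow, conj_two]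
  split_ifs <;> simp

lemma inner_x_er_neg (j t : ℕ) :
    ⟪x (Int.negSucc j), er t⟫_ℂ = if t < j+2 then (2:ℂ)^(j+1) else 0 := by
  rw [x_negSucc, inner_add_left, inner_smul_left, inner_el_er, sum_inner, map_pow, conj_two]
  have h0 : ∀ m ∈ Finset.range (j+2), ⟪er m, er t⟫_ℂ = if m = t then 1 else 0 :=
    fun m _ => inner_er_er m t
  rw [Finset.sum_congr rfl h0, Finset.sum_ite_eq' (Finset.range (j+2)) t (fun _ => (1:ℂ))]
  simp only [Finset.mem_range]
  split_ifs <;> simp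

/-- The test vectors orthogonal to every `x n`. -/
def psi : ℕ → AMB
  | 0 => er 0 - er 1 - el 0 + (2:ℂ) • el 1
  | (m+1) => er (m+1) - er (m+2) - (2:ℂ)^(m+1) • el ((m:ℤ)+1) + (2:ℂ)^(m+2) • el ((m:ℤ)+2)
      - (2:ℂ)^(m+1) • el (Int.negSucc m)

lemma inner_x_psi (n : ℤ) (m : ℕ) : ⟪x n, psi m⟫_ℂ = 0 := by
  cases m with
  | zero =>
      rw [show psi 0 = er 0 - er 1 - el 0 + (2:ℂ) • el 1 from rfl]
      rw [inner_add_right, inner_sub_right, inner_sub_right, inner_smul_right]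
      rw [show (0:ℤ) = ((0:ℕ):ℤ) from rfl, show (1:ℤ) = ((1:ℕ):ℤ) from rfl]
      cases n with
      | ofNat k =>
          rw [show Int.ofNat k = (k:ℤ) from rfl]
          rw [inner_x_er_nat, inner_x_er_nat, inner_x_el, inner_x_el]
          simp only [Int.natCast_inj]
          by_cases h0 : k = 0
          · subst h0; norm_num
          · by_cases h1 : k = 1
            · subst h1; norm_num
            · rw [if_neg h0, if_neg h1, if_neg h0, if_neg h1]; ring
      | negSucc j =>
          rw [inner_x_er_neg, inner_x_er_neg, inner_x_el, inner_x_el]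
          have hn0 : ¬(Int.negSucc j = ((0:ℕ):ℤ)) := by rw [Int.negSucc_eq]; omega
          have hn1 : ¬(Int.negSucc j = ((1:ℕ):ℤ)) := by rw [Int.negSucc_eq]; omega
          rw [if_pos (show 0 < j+2 by omega), if_pos (show 1 < j+2 by omega),
            if_neg hn0, if_neg hn1]
          ring
  | succ m =>
      rw [show psi (m+1) = er (m+1) - er (m+2) - (2:ℂ)^(m+1) • el ((m:ℤ)+1)
            + (2:ℂ)^(m+2) • el ((m:ℤ)+2) - (2:ℂ)^(m+1) • el (Int.negSucc m) from rfl]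
      rw [inner_sub_right, inner_add_right, inner_sub_right, inner_sub_right,
        inner_smul_right, inner_smul_right, inner_smul_right]
      rw [show ((m:ℤ)+1) = ((m+1 : ℕ) : ℤ) by push_cast; ring,
        show ((m:ℤ)+2) = ((m+2 : ℕ) : ℤ) by push_cast; ring]
      cases n with
      | ofNat k =>
          rw [show Int.ofNat k = (k:ℤ) from rfl]
          rw [inner_x_er_nat, inner_x_er_nat, inner_x_el, inner_x_el, inner_x_el]
          have hkneg : ¬((k:ℤ) = Int.negSucc m) := by rw [Int.negSucc_eq]; omega
          rw [if_neg hkneg]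
          simp only [Int.natCast_inj]
          by_cases h0 : k = m+1
          · subst h0
            have h12 : ¬((m+1 : ℕ) = m+2) := by omega
            rw [if_pos rfl, if_neg h12, if_pos rfl, if_neg h12]
            ring
          · by_cases h1 : k = m+2
            · subst h1
              have h21 : ¬((m+2 : ℕ) = m+1) := by omega
              rw [if_neg h21, if_pos rfl, if_neg h21, if_pos rfl]
              ring
            · rw [if_neg h0, if_neg h1, if_neg h0, if_neg h1]; ring
      | negSucc j =>
          rw [inner_x_er_neg, inner_x_er_neg, inner_x_el, inner_x_el, inner_x_el]
          have hn1 : ¬(Int.negSucc j = ((m+1:ℕ):ℤ)) := by rw [Int.negSucc_eq]; omega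
          have hn2 : ¬(Int.negSucc j = ((m+2:ℕ):ℤ)) := by rw [Int.negSucc_eq]; omega
          rw [if_neg hn1, if_neg hn2]
          by_cases h0 : j = m
          · subst h0
            rw [if_pos (show j+1 < j+2 by omega), if_neg (show ¬(j+2 < j+2) by omega)]
            rw [if_pos rfl]
            ring
          · have hne : ¬(Int.negSucc j = Int.negSucc m) := fun h => h0 (Int.negSucc.inj h)
            rw [if_neg hne]
            by_cases h1 : m < j
            · rw [if_pos (show m+1 < j+2 by omega), if_pos (show m+2 < j+2 by omega)]; ring
            · rw [if_neg (show ¬(m+1 < j+2) by omega), if_neg (show ¬(m+2 < j+2) by omega)]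
              ring


/-! ### Orthogonality to all of `Hs`, and injectivity of `P` on `Hs` -/

lemma inner_eq_zero_of_mem_Hs {v u : AMB} (hv : v ∈ Hs) (hu : ∀ n, ⟪x n, u⟫_ℂ = 0) :
    ⟪v, u⟫_ℂ = 0 := by
  have hC : IsClosed {w : AMB | ⟪w, u⟫_ℂ = 0} :=
    isClosed_eq (Continuous.inner continuous_id continuous_const) continuous_const
  have hspan : (Hspan : Set AMB) ⊆ {w : AMB | ⟪w, u⟫_ℂ = 0} := by
    intro w hw
    induction hw using Submodule.span_induction with
    | mem w hw => obtain ⟨n, rfl⟩ := hw; exact hu n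
    | zero => simp
    | add a b _ _ ha hb => simp only [Set.mem_setOf_eq] at ha hb ⊢; rw [inner_add_left, ha, hb, add_zero]
    | smul c a _ ha => simp only [Set.mem_setOf_eq] at ha ⊢; rw [inner_smul_left, ha, mul_zero]
  have hv' : v ∈ closure (Hspan : Set AMB) := by
    have : (Hs : Set AMB) = closure (Hspan : Set AMB) := Hspan.topologicalClosure_coe
    rw [← this]; exact hv
  exact hC.closure_subset_iff.mpr hspan hv'

lemma eq_zero_of_P_eq_zero {v : AMB} (hv : v ∈ Hs) (hP : P v = 0) : v = 0 := by
  have hinl : ∀ n : ℤ, v (Sum.inl n) = 0 := by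
    intro n
    have := congrArg (fun w : Z2 => w n) hP
    simpa using this
  have hstep : ∀ m : ℕ, v (Sum.inr m) = v (Sum.inr (m+1)) := by
    intro m
    have h0 : ⟪v, psi m⟫_ℂ = 0 := inner_eq_zero_of_mem_Hs hv (fun n => inner_x_psi n m)
    cases m with
    | zero =>
        rw [show psi 0 = er 0 - er 1 - el 0 + (2:ℂ) • el 1 from rfl] at h0
        rw [inner_add_right, inner_sub_right, inner_sub_right, inner_smul_right] at h0
        rw [el, el, er, er, inner_apply_e, inner_apply_e, inner_apply_e, inner_apply_e,
          hinl 0, hinl 1] at h0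
        simp only [map_zero, mul_zero, sub_zero, add_zero] at h0
        have h1 : (starRingEnd ℂ) ((v : ∀ _ : I2, ℂ) (Sum.inr 0))
            = (starRingEnd ℂ) ((v : ∀ _ : I2, ℂ) (Sum.inr 1)) := by
          linear_combination h0
        have h2' := congrArg (starRingEnd ℂ) h1
        simpa using h2'
    | succ m =>
        rw [show psi (m+1) = er (m+1) - er (m+2) - (2:ℂ)^(m+1) • el ((m:ℤ)+1)
              + (2:ℂ)^(m+2) • el ((m:ℤ)+2) - (2:ℂ)^(m+1) • el (Int.negSucc m) from rfl] at h0
        rw [inner_sub_right, inner_add_right, inner_sub_right, inner_sub_right,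
          inner_smul_right, inner_smul_right, inner_smul_right] at h0
        rw [el, el, el, er, er, inner_apply_e, inner_apply_e, inner_apply_e,
          inner_apply_e, inner_apply_e] at h0
        rw [hinl ((m:ℤ)+1), hinl ((m:ℤ)+2), hinl (Int.negSucc m)] at h0
        simp only [map_zero, mul_zero, sub_zero, add_zero] at h0
        have h1 : (starRingEnd ℂ) ((v : ∀ _ : I2, ℂ) (Sum.inr (m+1)))
            = (starRingEnd ℂ) ((v : ∀ _ : I2, ℂ) (Sum.inr (m+2))) := by
          linear_combination h0
        have h2' := congrArg (starRingEnd ℂ) h1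
        simpa using h2'
  have hconst : ∀ m : ℕ, v (Sum.inr m) = v (Sum.inr 0) := by
    intro m
    induction m with
    | zero => rfl
    | succ m ih => rw [← hstep m]; exact ih
  have h2 : (0:ℝ) < (2:ℝ≥0∞).toReal := by norm_num
  have hsum : Summable (fun m : ℕ => ‖v (Sum.inr m)‖ ^ (2:ℝ≥0∞).toReal) :=
    ((lp.memℓp v).summable h2).comp_injective Sum.inr_injective
  have hsum' : Summable (fun _ : ℕ => ‖v (Sum.inr 0)‖ ^ (2:ℝ≥0∞).toReal) := by
    refine hsum.congr ?_
    intro m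
    rw [hconst m]
  have hzero : ‖v (Sum.inr 0)‖ ^ (2:ℝ≥0∞).toReal = 0 := by
    exact (summable_const_iff _).mp hsum'
  have hv0 : v (Sum.inr 0) = 0 := by
    have : ‖v (Sum.inr 0)‖ = 0 := by
      by_contra hne
      have h1 : (0:ℝ) < ‖v (Sum.inr 0)‖ := lt_of_le_of_ne (norm_nonneg _) (Ne.symm hne)
      have := Real.rpow_pos_of_pos h1 ((2:ℝ≥0∞).toReal)
      rw [hzero] at this
      exact lt_irrefl 0 this
    exact norm_eq_zero.mp this
  apply lp.ext
  funext i
  rcases i with n | m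
  · rw [hinl n]; rfl
  · rw [hconst m, hv0]; rfl


/-! ### `fv` belongs to `Hs` -/

/-- The approximating combinations converging to `fv`. -/
def wv (j : ℕ) : AMB :=
  (∑ k ∈ Finset.range (j+2), ((2:ℂ)⁻¹)^k • x (k:ℤ)) - ((2:ℂ)⁻¹)^(j+1) • x (Int.negSucc j)

lemma wv_eq (j : ℕ) :
    wv j = (∑ k ∈ Finset.range (j+2), fterm k) - ((2:ℂ)⁻¹)^(j+1) • el (Int.negSucc j) := by
  have hxsum : (∑ k ∈ Finset.range (j+2), ((2:ℂ)⁻¹)^k • x (k:ℤ))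
      = (∑ k ∈ Finset.range (j+2), fterm k) + ∑ k ∈ Finset.range (j+2), er k := by
    rw [← Finset.sum_add_distrib]
    apply Finset.sum_congr rfl
    intro k _
    rw [x_nat, smul_add, fterm, smul_smul, ← mul_pow]
    norm_num
  have hxneg : ((2:ℂ)⁻¹)^(j+1) • x (Int.negSucc j)
      = ((2:ℂ)⁻¹)^(j+1) • el (Int.negSucc j) + ∑ k ∈ Finset.range (j+2), er k := by
    rw [x_negSucc, smul_add, smul_smul, ← mul_pow]
    norm_num
  rw [wv, hxsum, hxneg]
  abel

lemma wv_mem_span (j : ℕ) : wv j ∈ Hspan := by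
  apply Submodule.sub_mem
  · apply Submodule.sum_mem
    intro k _
    exact Submodule.smul_mem _ _ (Submodule.subset_span (Set.mem_range_self _))
  · exact Submodule.smul_mem _ _ (Submodule.subset_span (Set.mem_range_self _))

lemma tendsto_wv : Filter.Tendsto wv Filter.atTop (nhds fv) := by
  have htend1 : Filter.Tendsto (fun j : ℕ => ∑ k ∈ Finset.range (j+2), fterm k)
      Filter.atTop (nhds fv) :=
    (summable_fterm.hasSum.tendsto_sum_nat).comp (Filter.tendsto_add_atTop_nat 2)
  have htend2 : Filter.Tendsto (fun j : ℕ => ((2:ℂ)⁻¹)^(j+1) • el (Int.negSucc j))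
      Filter.atTop (nhds (0:AMB)) := by
    rw [tendsto_zero_iff_norm_tendsto_zero]
    have hn : ∀ j:ℕ, ‖((2:ℂ)⁻¹)^(j+1) • el (Int.negSucc j)‖ = (2⁻¹:ℝ)^(j+1) := by
      intro j
      rw [norm_smul, el, norm_e, mul_one, norm_pow, norm_inv]
      norm_num
    have hgeo : Filter.Tendsto (fun j : ℕ => (2⁻¹:ℝ)^(j+1)) Filter.atTop (nhds 0) :=
      (tendsto_pow_atTop_nhds_zero_of_lt_one (by norm_num) (by norm_num)).comp
        (Filter.tendsto_add_atTop_nat 1)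
    exact hgeo.congr (fun j => (hn j).symm)
  have := htend1.sub htend2
  rw [sub_zero] at this
  exact this.congr (fun j => (wv_eq j).symm)

lemma fv_mem_Hs : fv ∈ Hs := by
  show fv ∈ (Hspan.topologicalClosure : Set AMB)
  rw [Submodule.topologicalClosure_coe]
  exact mem_closure_of_tendsto tendsto_wv (Filter.Eventually.of_forall wv_mem_span)

lemma fv_inl_negSucc (j : ℕ) : (fv : ∀ _ : I2, ℂ) (Sum.inl (Int.negSucc j)) = 0 := by
  have h := inner_e_apply (Sum.inl (Int.negSucc j)) fv
  rw [← h]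
  exact inner_elneg_fv j


/-! ### Transfer to `L²` of the circle via the Fourier Hilbert basis -/

section Circle

variable [hT : Fact (0 < 2 * π)]

/-- The `L²` space of the circle of circumference `2π`. -/
abbrev LL : Type := Lp ℂ 2 (@haarAddCircle (2 * π) _)

/-- The Fourier Hilbert basis. -/
def B' : HilbertBasis ℤ ℂ LL := @fourierBasis (2 * π) _

/-- The isometry `ℓ²(ℤ) ≃ L²` coming from the Fourier basis, as a continuous linear map. -/
def Phi : Z2 →L[ℂ] LL :=
  (B'.repr.symm.toContinuousLinearEquiv : Z2 ≃L[ℂ] LL).toContinuousLinearMap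

lemma Phi_apply (z : Z2) : Phi z = B'.repr.symm z := rfl

/-- The embedding `H → L²(𝕋)`. -/
def iota : Hs →L[ℂ] LL := Phi.comp (P.comp Hs.subtypeL)

lemma iota_apply (h : Hs) : iota h = B'.repr.symm (P (h : AMB)) := rfl

lemma iota_x (n : ℤ) : iota ⟨x n, x_mem_Hs n⟩ = fourierLp 2 n := by
  rw [iota_apply]
  show B'.repr.symm (P (x n)) = _
  rw [P_x, B'.repr_symm_single]
  exact congrFun coe_fourierBasis n

lemma iota_injective : Function.Injective iota := by
  intro a b hab
  have h1 : P (a : AMB) = P (b : AMB) := by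
    have := congrArg B'.repr hab
    rwa [iota_apply, iota_apply, LinearIsometryEquiv.apply_symm_apply,
      LinearIsometryEquiv.apply_symm_apply] at this
  have h2 : P ((a : AMB) - (b : AMB)) = 0 := by rw [map_sub, h1, sub_self]
  have h3 : (a : AMB) - (b : AMB) ∈ Hs := Hs.sub_mem a.2 b.2
  have h4 := eq_zero_of_P_eq_zero h3 h2
  exact Subtype.ext (sub_eq_zero.mp h4)

lemma iota_span_mem {y : AMB} (hy : y ∈ Hspan) :
    Phi (P y) ∈ Submodule.span ℂ (Set.range (fourierLp 2 : ℤ → LL)) := by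
  induction hy using Submodule.span_induction with
  | mem w hw =>
      obtain ⟨n, rfl⟩ := hw
      rw [Phi_apply, P_x, B'.repr_symm_single]
      exact Submodule.subset_span ⟨n, (congrFun coe_fourierBasis n).symm⟩
  | zero => rw [map_zero, map_zero]; exact Submodule.zero_mem _
  | add a b _ _ ha hb => rw [map_add, map_add]; exact Submodule.add_mem _ ha hb
  | smul c a _ ha => rw [_root_.map_smul, _root_.map_smul]; exact Submodule.smul_mem _ c ha

lemma iota_dense :
    Dense {h : Hs | iota h ∈ Submodule.span ℂ (Set.range (fourierLp 2 : ℤ → LL))} := by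
  intro h
  rw [Metric.mem_closure_iff]
  intro ε hε
  have hmem : (h : AMB) ∈ closure (Hspan : Set AMB) := by
    rw [← Submodule.topologicalClosure_coe]
    exact h.2
  rw [Metric.mem_closure_iff] at hmem
  obtain ⟨y, hy, hdist⟩ := hmem ε hε
  refine ⟨⟨y, Hspan.le_topologicalClosure hy⟩, ?_, ?_⟩
  · exact iota_span_mem hy
  · rw [Subtype.dist_eq]
    exact hdist

lemma iota_fv_neg (k : ℤ) (hk : k < 0) :
    ⟪fourierLp 2 k, iota ⟨fv, fv_mem_Hs⟩⟫_ℂ = 0 := by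
  have h1 : ⟪fourierLp 2 k, iota ⟨fv, fv_mem_Hs⟩⟫_ℂ = B'.repr (iota ⟨fv, fv_mem_Hs⟩) k := by
    rw [B'.repr_apply_apply]
    congr 1
    exact (congrFun coe_fourierBasis k).symm
  rw [h1, iota_apply, LinearIsometryEquiv.apply_symm_apply]
  show (fv : ∀ _ : I2, ℂ) (Sum.inl k) = 0
  cases k with
  | ofNat m =>
      exact absurd hk (by rw [show Int.ofNat m = (m:ℤ) from rfl]; omega)
  | negSucc j => exact fv_inl_negSucc j

lemma not_in_closure :
    (⟨fv, fv_mem_Hs⟩ : Hs) ∉ closure {h : Hs | iota h ∈ Submodule.span ℂ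
      ((fourierLp 2 : ℤ → LL) '' {n : ℤ | 0 ≤ n})} := by
  set S1 := {h : Hs | iota h ∈ Submodule.span ℂ ((fourierLp 2 : ℤ → LL) '' {n : ℤ | 0 ≤ n})}
    with hS1def
  have hsub : S1 ⊆ {h : Hs | ⟪(h : AMB), gv⟫_ℂ = 0} := by
    intro h hh
    have h1 : B'.repr (iota h) ∈ Submodule.span ℂ
        (⇑B'.repr '' ((fourierLp 2 : ℤ → LL) '' {n : ℤ | 0 ≤ n})) :=
      Submodule.apply_mem_span_image_of_mem_span (B'.repr.toLinearEquiv.toLinearMap) hh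
    have himg : ⇑B'.repr '' ((fourierLp 2 : ℤ → LL) '' {n : ℤ | 0 ≤ n})
        = (fun n : ℤ => lp.single 2 n (1:ℂ)) '' {n : ℤ | 0 ≤ n} := by
      rw [Set.image_image]
      apply Set.image_congr
      intro n _
      rw [← congrFun coe_fourierBasis n]
      exact B'.repr_self n
    have himg2 : (fun n : ℤ => lp.single 2 n (1:ℂ)) '' {n : ℤ | 0 ≤ n}
        = ⇑P '' (x '' {n : ℤ | 0 ≤ n}) := by
      rw [Set.image_image]
      apply Set.image_congr
      intro n _
      exact (P_x n).symm
    rw [himg, himg2] at h1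
    have h2 : P (h : AMB) ∈ Submodule.span ℂ (⇑P '' (x '' {n : ℤ | 0 ≤ n})) := by
      have heq : B'.repr (iota h) = P (h : AMB) := by
        rw [iota_apply, LinearIsometryEquiv.apply_symm_apply]
      rwa [heq] at h1
    rw [show (⇑P) = ⇑(P : AMB →ₗ[ℂ] Z2) from rfl, Submodule.span_image] at h2
    obtain ⟨w, hw, hPw⟩ := h2
    replace hPw : P w = P (h : AMB) := hPw
    have hwHs : w ∈ Hs :=
      Hspan.le_topologicalClosure
        (Submodule.span_mono (Set.image_subset_range x {n : ℤ | 0 ≤ n}) hw)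
    have hPzero : P ((h : AMB) - w) = 0 := by
      rw [map_sub, hPw, sub_self]
    have hmemsub : (h : AMB) - w ∈ Hs := Hs.sub_mem h.2 hwHs
    have heq2 : (h : AMB) = w := sub_eq_zero.mp (eq_zero_of_P_eq_zero hmemsub hPzero)
    have hwg : ⟪w, gv⟫_ℂ = 0 := by
      clear hPw hPzero hmemsub heq2 hwHs
      induction hw using Submodule.span_induction with
      | mem a ha =>
          obtain ⟨n, hn, rfl⟩ := ha
          exact inner_x_gv n hn
      | zero => simp
      | add a b _ _ ha hb => rw [inner_add_left, ha, hb, add_zero]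
      | smul c a _ ha => rw [inner_smul_left, ha, mul_zero]
    show ⟪(h : AMB), gv⟫_ℂ = 0
    rw [heq2]
    exact hwg
  have hclosed : IsClosed {h : Hs | ⟪(h : AMB), gv⟫_ℂ = 0} :=
    isClosed_eq (Continuous.inner continuous_subtype_val continuous_const) continuous_const
  intro hmem
  have h0 : ⟪fv, gv⟫_ℂ = 0 := hclosed.closure_subset_iff.mpr hsub hmem
  rw [inner_fv_gv] at h0
  norm_num at h0

end Circle

end Stmt18

end Stmt18Construction

open Stmt18 in
/-- There is a Hilbert space `H` continuously embedded in `L²(𝕋)` containing the trigonometric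
polynomials densely, such that the holomorphic polynomials are not dense in `H ∩ H²`. -/
theorem stmt18 [Fact (0 < 2 * π)] :
    ∃ (H : Type) (_ : NormedAddCommGroup H) (_ : InnerProductSpace ℂ H) (_ : CompleteSpace H)
      (ι : H →L[ℂ] Lp ℂ 2 (@haarAddCircle (2 * π) _)),
      Function.Injective ι ∧
      -- H contains the trigonometric polynomials
      (∀ n : ℤ, ∃ h : H, ι h = fourierLp 2 n) ∧
      -- the trigonometric polynomials are dense in H
      Dense {h : H | ι h ∈ Submodule.span ℂ
        (Set.range (fourierLp 2 : ℤ → Lp ℂ 2 (@haarAddCircle (2 * π) _)))} ∧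
      -- the holomorphic polynomials are not dense in H ∩ H²
      ∃ f : H,
        (∀ k : ℤ, k < 0 → ⟪(fourierLp 2 k : Lp ℂ 2 (@haarAddCircle (2 * π) _)), ι f⟫_ℂ = 0) ∧
        f ∉ closure {h : H | ι h ∈ Submodule.span ℂ
          ((fourierLp 2 : ℤ → Lp ℂ 2 (@haarAddCircle (2 * π) _)) '' {n : ℤ | 0 ≤ n})} := by
  refine ⟨Hs, inferInstance, inferInstance, inferInstance, iota, iota_injective, ?_, ?_, ?_⟩
  · intro n
    exact ⟨⟨x n, x_mem_Hs n⟩, iota_x n⟩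
  · exact iota_dense
  · exact ⟨⟨fv, fv_mem_Hs⟩, iota_fv_neg, not_in_closure⟩
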